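/- Let p be a prime and n > 1. The holomorph Hol(C_{p^n}) of the cyclic group of order p^n has a normal subgroup N isomorphic to C_p × C_p such that the quotient Hol(C_{p^n})/N is isomorphic to Hol(C_{p^{n-1}}). -/

import Mathlib

/-- The holomorph of a group `G`: the semidirect product `G ⋊ Aut(G)` with the
natural action of `MulAut G` on `G`. -/
def Hol (G : Type*) [Group G] :=
  SemidirectProduct G (MulAut G) (MonoidHom.id (MulAut G))

instance (G : Type*) [Group G] : Group (Hol G) :=
  inferInstanceAs (Group (SemidirectProduct G (MulAut G) (MonoidHom.id (MulAut G))))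

/-- `MulAut` of `Multiplicative G` is `AddAut G`. -/
def holMulAutEquivAddAut (G : Type*) [AddGroup G] :
    MulAut (Multiplicative G) ≃* Multiplicative (AddAut G) where
  toFun f := Multiplicative.ofAdd (AddEquiv.toMultiplicative.symm f)
  invFun f := AddEquiv.toMultiplicative (Multiplicative.toAdd f)
  left_inv f := by rfl
  right_inv f := by rfl
  map_mul' a b := rfl

/-- `MulAut (Multiplicative (ZMod m))` is the units of `ZMod m`. -/
def holZModAut (m : ℕ) : MulAut (Multiplicative (ZMod m)) ≃* (ZMod m)ˣ :=
  (holMulAutEquivAddAut (ZMod m)).trans (AddEquiv.toMultiplicativeLeft (ZMod.AddAutEquivUnits m))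

lemma holZModAut_spec (m : ℕ) (σ : MulAut (Multiplicative (ZMod m))) (x : ZMod m) :
    (σ (Multiplicative.ofAdd x)).toAdd = ((holZModAut m σ : (ZMod m)ˣ) : ZMod m) * x := by
  have h : ∀ (f : AddAut (ZMod m)) (y : ZMod m), f 1 * y = f y := by
    intro f y
    rw [mul_comm, ← y.intCast_zmod_cast, ← zsmul_eq_mul, ← map_zsmul, zsmul_one]
  exact (h (Multiplicative.toAdd (holMulAutEquivAddAut (ZMod m) σ)) x).symm

lemma holZModAut_symm_spec (m : ℕ) (v : (ZMod m)ˣ) (x : ZMod m) :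
    (holZModAut m).symm v (Multiplicative.ofAdd x)
      = Multiplicative.ofAdd ((v : ZMod m) * x) := rfl

section Red
variable {m k : ℕ} (hd : k ∣ m)

/-- Reduction on the Multiplicative ZMod groups. -/
def holRed₁ : Multiplicative (ZMod m) →* Multiplicative (ZMod k) :=
  AddMonoidHom.toMultiplicative (ZMod.castHom hd (ZMod k)).toAddMonoidHom

lemma holRed₁_apply (x : ZMod m) :
    holRed₁ hd (Multiplicative.ofAdd x) = Multiplicative.ofAdd (ZMod.castHom hd (ZMod k) x) := rfl

/-- Reduction on automorphism groups. -/
def holRed₂ : MulAut (Multiplicative (ZMod m)) →* MulAut (Multiplicative (ZMod k)) :=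
  ((holZModAut k).symm.toMonoidHom.comp (ZMod.unitsMap hd)).comp (holZModAut m).toMonoidHom

lemma holRed_compat (σ : MulAut (Multiplicative (ZMod m))) :
    (holRed₁ hd).comp σ.toMonoidHom = (holRed₂ hd σ).toMonoidHom.comp (holRed₁ hd) := by
  ext x
  show holRed₁ hd (σ x) = (holRed₂ hd σ) (holRed₁ hd x)
  have hx : x = Multiplicative.ofAdd (Multiplicative.toAdd (α := ZMod m) x) := rfl
  rw [hx, holRed₁_apply]
  show holRed₁ hd (σ (Multiplicative.ofAdd (Multiplicative.toAdd (α := ZMod m) x))) =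
    (holZModAut k).symm (ZMod.unitsMap hd (holZModAut m σ)) _
  rw [holZModAut_symm_spec]
  have h2 : σ (Multiplicative.ofAdd (Multiplicative.toAdd (α := ZMod m) x))
      = Multiplicative.ofAdd (((holZModAut m σ : (ZMod m)ˣ) : ZMod m) * (Multiplicative.toAdd (α := ZMod m) x)) := by
    rw [← holZModAut_spec]; rfl
  rw [h2, holRed₁_apply]
  congr 1
  rw [map_mul]
  simp [ZMod.unitsMap_def]

/-- Reduction on holomorphs. -/
def holRed : Hol (Multiplicative (ZMod m)) →* Hol (Multiplicative (ZMod k)) :=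
  SemidirectProduct.map (holRed₁ hd) (holRed₂ hd) (holRed_compat hd)

lemma holRed_surjective [NeZero m] [NeZero k] : Function.Surjective (holRed hd) := by
  rintro ⟨b, τ⟩
  obtain ⟨c, hc⟩ := ZMod.natCast_zmod_surjective (n := k) b.toAdd
  obtain ⟨u, hu⟩ := ZMod.unitsMap_surjective hd (holZModAut k τ)
  refine ⟨⟨Multiplicative.ofAdd (c : ZMod m), (holZModAut m).symm u⟩, ?_⟩
  have h1 : holRed₁ hd (Multiplicative.ofAdd (c : ZMod m)) = b := by
    rw [holRed₁_apply, map_natCast, hc]; rfl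
  have h2 : holRed₂ hd ((holZModAut m).symm u) = τ := by
    show (holZModAut k).symm (ZMod.unitsMap hd (holZModAut m ((holZModAut m).symm u))) = τ
    rw [MulEquiv.apply_symm_apply, hu, MulEquiv.symm_apply_apply]
  exact SemidirectProduct.ext h1 h2

end Red

section Ker
variable (p n : ℕ) (hp : p.Prime) (hn : 1 < n)

/-- The embedding `ZMod p →+ ZMod (p ^ n)` by multiplication by `p ^ (n - 1)`. -/
noncomputable def holJ : ZMod p →+ ZMod (p ^ n) :=
  ZMod.lift p ⟨zmultiplesHom (ZMod (p ^ n)) ((p : ZMod (p ^ n)) ^ (n - 1)), by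
    have : ((p : ZMod (p ^ n)) ^ n) = 0 := by
      rw [← Nat.cast_pow, ZMod.natCast_self]
    simp only [zmultiplesHom_apply, natCast_zsmul, nsmul_eq_mul]
    rw [← pow_succ', Nat.sub_add_cancel (le_of_lt hn), this]⟩

lemma holJ_coe (c : ℤ) : holJ p n hn ((c : ZMod p)) = c * (p : ZMod (p ^ n)) ^ (n - 1) := by
  rw [holJ, ZMod.lift_coe]
  simp [zsmul_eq_mul]

lemma holJ_mul (x y : ZMod p) : holJ p n hn x * holJ p n hn y = 0 := by
  obtain ⟨c, rfl⟩ := ZMod.intCast_surjective x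
  obtain ⟨d, rfl⟩ := ZMod.intCast_surjective y
  rw [holJ_coe, holJ_coe]
  have h : ((p : ZMod (p ^ n)) ^ (n - 1)) * ((p : ZMod (p ^ n)) ^ (n - 1)) = 0 := by
    rw [← pow_add, ← Nat.cast_pow, ZMod.natCast_eq_zero_iff]
    exact pow_dvd_pow p (by omega)
  linear_combination (c : ZMod (p ^ n)) * d * h

lemma holJ_inj (hpp : p.Prime) : Function.Injective (holJ p n hn) := by
  haveI : NeZero (p ^ n) := NeZero.of_pos (pow_pos hpp.pos n)
  rw [injective_iff_map_eq_zero]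
  intro x hx
  obtain ⟨c, rfl⟩ := ZMod.intCast_surjective x
  rw [holJ_coe] at hx
  have h1 : (((c * (p : ℤ) ^ (n - 1)) : ℤ) : ZMod (p ^ n)) = 0 := by push_cast; exact hx
  rw [ZMod.intCast_zmod_eq_zero_iff_dvd] at h1
  have hpe : ((p : ℤ)) ^ (n - 1) ≠ 0 := pow_ne_zero _ (by exact_mod_cast hpp.ne_zero)
  have h2 : ((p : ℤ)) ^ (n - 1) * (p : ℤ) ∣ (p : ℤ) ^ (n - 1) * c := by
    rw [← pow_succ, Nat.sub_add_cancel (le_of_lt hn)]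
    push_cast at h1
    rwa [mul_comm] at h1
  have h3 : (p : ℤ) ∣ c := (mul_dvd_mul_iff_left hpe).mp h2
  rwa [ZMod.intCast_zmod_eq_zero_iff_dvd]

/-- The unit `1 + p^(n-1) b` of `ZMod (p ^ n)`. -/
noncomputable def holU (b : ZMod p) : (ZMod (p ^ n))ˣ :=
  Units.mkOfMulEqOne (1 + holJ p n hn b) (1 - holJ p n hn b)
    (by linear_combination - holJ_mul p n hn b b)

lemma holU_val (b : ZMod p) : (holU p n hn b : ZMod (p ^ n)) = 1 + holJ p n hn b := rfl

lemma holU_mul (b b' : ZMod p) :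
    holU p n hn b * holU p n hn b' = holU p n hn (b + b') := by
  ext
  rw [Units.val_mul, holU_val, holU_val, holU_val, map_add]
  linear_combination holJ_mul p n hn b b'

/-- The embedding of `C_p × C_p` into the holomorph. -/
noncomputable def holPsi : Multiplicative (ZMod p) × Multiplicative (ZMod p) →*
    Hol (Multiplicative (ZMod (p ^ n))) where
  toFun x := ⟨Multiplicative.ofAdd (holJ p n hn x.1.toAdd),
    (holZModAut (p ^ n)).symm (holU p n hn x.2.toAdd)⟩
  map_one' := by
    refine SemidirectProduct.ext ?_ ?_
    · show Multiplicative.ofAdd (holJ p n hn 0) = 1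
      rw [map_zero]; rfl
    · show (holZModAut (p ^ n)).symm (holU p n hn 0) = 1
      have : holU p n hn 0 = 1 := by ext; rw [holU_val, map_zero, add_zero]; rfl
      rw [this, map_one]
  map_mul' x y := by
    refine SemidirectProduct.ext ?_ ?_
    · show Multiplicative.ofAdd (holJ p n hn (x.1.toAdd + y.1.toAdd)) =
        Multiplicative.ofAdd (holJ p n hn x.1.toAdd) *
          ((holZModAut (p ^ n)).symm (holU p n hn x.2.toAdd))
            (Multiplicative.ofAdd (holJ p n hn y.1.toAdd))
      rw [holZModAut_symm_spec, holU_val]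
      have : (1 + holJ p n hn x.2.toAdd) * holJ p n hn y.1.toAdd = holJ p n hn y.1.toAdd := by
        linear_combination holJ_mul p n hn x.2.toAdd y.1.toAdd
      rw [this, map_add]
      rfl
    · show (holZModAut (p ^ n)).symm (holU p n hn (x.2.toAdd + y.2.toAdd)) = _ * _
      rw [← holU_mul, map_mul]

lemma holPsi_inj (hpp : p.Prime) : Function.Injective (holPsi p n hn) := by
  rw [injective_iff_map_eq_one]
  rintro ⟨a, b⟩ hab
  have h1 : Multiplicative.ofAdd (holJ p n hn a.toAdd) = 1 :=
    congrArg SemidirectProduct.left hab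
  have h2 : (holZModAut (p ^ n)).symm (holU p n hn b.toAdd) = 1 :=
    congrArg SemidirectProduct.right hab
  have ha : holJ p n hn a.toAdd = 0 := by simpa using congrArg Multiplicative.toAdd h1
  have hu : holU p n hn b.toAdd = 1 := by
    have := congrArg (holZModAut (p ^ n)) h2
    rwa [MulEquiv.apply_symm_apply, map_one] at this
  have hb : holJ p n hn b.toAdd = 0 := by
    have := congrArg (Units.val) hu
    rw [holU_val] at this
    simpa using this
  have ha' : a.toAdd = 0 := holJ_inj p n hn hpp (by simpa using ha)
  have hb' : b.toAdd = 0 := holJ_inj p n hn hpp (by simpa using hb)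
  exact Prod.ext (by simpa using ha') (by simpa using hb')

lemma holJ_castHom (x : ZMod p) :
    ZMod.castHom (pow_dvd_pow p (Nat.sub_le n 1)) (ZMod (p ^ (n - 1))) (holJ p n hn x) = 0 := by
  obtain ⟨c, rfl⟩ := ZMod.intCast_surjective x
  rw [holJ_coe, map_mul, map_pow, map_natCast]
  have : ((p : ZMod (p ^ (n - 1))) ^ (n - 1)) = 0 := by
    rw [← Nat.cast_pow, ZMod.natCast_self]
  rw [this, mul_zero]

lemma holJ_surjOn (hpp : p.Prime) (t : ZMod (p ^ n))
    (ht : ZMod.castHom (pow_dvd_pow p (Nat.sub_le n 1)) (ZMod (p ^ (n - 1))) t = 0) :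
    ∃ a : ZMod p, holJ p n hn a = t := by
  haveI : NeZero (p ^ n) := NeZero.of_pos (pow_pos hpp.pos n)
  have h2 : ((t.val : ℕ) : ZMod (p ^ (n - 1))) = 0 := by
    rw [← map_natCast (ZMod.castHom (pow_dvd_pow p (Nat.sub_le n 1)) (ZMod (p ^ (n - 1)))),
      ZMod.natCast_zmod_val]
    exact ht
  rw [ZMod.natCast_eq_zero_iff] at h2
  obtain ⟨c, hc⟩ := h2
  refine ⟨((c : ℤ) : ZMod p), ?_⟩
  rw [holJ_coe]
  have : t = ((t.val : ℕ) : ZMod (p ^ n)) := (ZMod.natCast_zmod_val t).symm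
  rw [this, hc]
  push_cast
  ring

lemma holU_surjOn (hpp : p.Prime) (w : (ZMod (p ^ n))ˣ)
    (hw : ZMod.unitsMap (pow_dvd_pow p (Nat.sub_le n 1)) w = 1) :
    ∃ b : ZMod p, holU p n hn b = w := by
  have hcw : ZMod.castHom (pow_dvd_pow p (Nat.sub_le n 1)) (ZMod (p ^ (n - 1)))
      ((w : ZMod (p ^ n)) - 1) = 0 := by
    have h1 : ((ZMod.unitsMap (pow_dvd_pow p (Nat.sub_le n 1)) w : ZMod (p ^ (n - 1)))) =
        ZMod.castHom (pow_dvd_pow p (Nat.sub_le n 1)) (ZMod (p ^ (n - 1))) (w : ZMod (p ^ n)) :=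
      rfl
    rw [map_sub, map_one, ← h1, hw]
    simp
  obtain ⟨b, hb⟩ := holJ_surjOn p n hn hpp _ hcw
  refine ⟨b, Units.ext ?_⟩
  rw [holU_val, hb]
  ring

lemma holPsi_range_eq_ker (hpp : p.Prime) :
    (holPsi p n hn).range = (holRed (m := p ^ n) (pow_dvd_pow p (Nat.sub_le n 1))).ker := by
  ext x
  constructor
  · rintro ⟨⟨a, b⟩, rfl⟩
    rw [MonoidHom.mem_ker]
    refine SemidirectProduct.ext ?_ ?_
    · show holRed₁ (pow_dvd_pow p (Nat.sub_le n 1))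
        (Multiplicative.ofAdd (holJ p n hn a.toAdd)) = 1
      rw [holRed₁_apply, holJ_castHom]
      rfl
    · show (holZModAut (p ^ (n - 1))).symm (ZMod.unitsMap (pow_dvd_pow p (Nat.sub_le n 1))
        (holZModAut (p ^ n) ((holZModAut (p ^ n)).symm (holU p n hn b.toAdd)))) = 1
      rw [MulEquiv.apply_symm_apply]
      have : ZMod.unitsMap (pow_dvd_pow p (Nat.sub_le n 1)) (holU p n hn b.toAdd) = 1 := by
        ext
        show ZMod.castHom (pow_dvd_pow p (Nat.sub_le n 1)) (ZMod (p ^ (n - 1)))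
          (holU p n hn b.toAdd : ZMod (p ^ n)) = 1
        rw [holU_val, map_add, map_one, holJ_castHom, add_zero]
      rw [this, map_one]
  · intro hx
    rw [MonoidHom.mem_ker] at hx
    have hl : holRed₁ (pow_dvd_pow p (Nat.sub_le n 1)) x.left = 1 :=
      congrArg SemidirectProduct.left hx
    have hr : (holZModAut (p ^ (n - 1))).symm (ZMod.unitsMap (pow_dvd_pow p (Nat.sub_le n 1))
        (holZModAut (p ^ n) x.right)) = 1 := congrArg SemidirectProduct.right hx
    have ht : ZMod.castHom (pow_dvd_pow p (Nat.sub_le n 1)) (ZMod (p ^ (n - 1)))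
        x.left.toAdd = 0 := by
      exact congrArg Multiplicative.toAdd hl
    obtain ⟨a, ha⟩ := holJ_surjOn p n hn hpp _ ht
    have hw : ZMod.unitsMap (pow_dvd_pow p (Nat.sub_le n 1)) (holZModAut (p ^ n) x.right) = 1 := by
      have := congrArg (holZModAut (p ^ (n - 1))) hr
      rwa [MulEquiv.apply_symm_apply, map_one] at this
    obtain ⟨b, hb⟩ := holU_surjOn p n hn hpp _ hw
    refine ⟨(Multiplicative.ofAdd a, Multiplicative.ofAdd b), ?_⟩
    refine SemidirectProduct.ext ?_ ?_
    · show Multiplicative.ofAdd (holJ p n hn a) = x.left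
      rw [ha]
      rfl
    · show (holZModAut (p ^ n)).symm (holU p n hn b) = x.right
      rw [hb, MulEquiv.symm_apply_apply]

end Ker

/-- For a prime `p` and `n > 1`, the holomorph of the cyclic group `C_{p^n}` has a normal
subgroup `N ≅ C_p × C_p` with `Hol(C_{p^n})/N ≅ Hol(C_{p^{n-1}})`. -/
theorem hol_cyclic_pPow_quotient (p n : ℕ) (hp : p.Prime) (hn : 1 < n) :
    ∃ (N : Subgroup (Hol (Multiplicative (ZMod (p ^ n))))) (hN : N.Normal),
      Nonempty (N ≃* Multiplicative (ZMod p) × Multiplicative (ZMod p)) ∧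
      Nonempty (letI := hN;
        (Hol (Multiplicative (ZMod (p ^ n))) ⧸ N) ≃* Hol (Multiplicative (ZMod (p ^ (n - 1))))) := by
  haveI : NeZero (p ^ n) := NeZero.of_pos (pow_pos hp.pos n)
  haveI : NeZero (p ^ (n - 1)) := NeZero.of_pos (pow_pos hp.pos (n - 1))
  refine ⟨(holRed (m := p ^ n) (pow_dvd_pow p (Nat.sub_le n 1))).ker,
    MonoidHom.normal_ker _, ⟨?_⟩, ⟨?_⟩⟩
  · exact (MulEquiv.subgroupCongr (holPsi_range_eq_ker p n hn hp).symm).trans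
      (MonoidHom.ofInjective (holPsi_inj p n hn hp)).symm
  · exact QuotientGroup.quotientKerEquivOfSurjective _ (holRed_surjective _)
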